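/- Let n ≥ 2 be an integer, let u : ℝⁿ → ℝ be a convex differentiable function with |∇u(x)| < 1 for all x ∈ ℝⁿ, and let V_u(x) = lim_{ρ→∞} u(ρx)/ρ be its blowdown. Then the closure of the tangent cone T_{V_u}(ℝⁿ) equals the tangential mapping T_{V_u}(0) at the origin, and both equal the closure of the gradient image ∇u(ℝⁿ) = {∇u(x) : x ∈ ℝⁿ}. -/

import Mathlib

open Set Filter Topology
open scoped RealInnerProductSpace

variable {n : ℕ}

lemma aux_subgrad (u : EuclideanSpace ℝ (Fin n) → ℝ) (hconv : ConvexOn ℝ Set.univ u)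
    (hdiff : Differentiable ℝ u) (x y : EuclideanSpace ℝ (Fin n)) :
    u x + ⟪gradient u x, y - x⟫ ≤ u y := by
  set φ : ℝ → ℝ := fun t => u (x + t • (y - x)) with hφdef
  have hφ : ConvexOn ℝ Set.univ φ := by
    have h := hconv.comp_affineMap (AffineMap.lineMap x y : ℝ →ᵃ[ℝ] EuclideanSpace ℝ (Fin n))
    simp only [Set.preimage_univ] at h
    have : φ = u ∘ (AffineMap.lineMap x y : ℝ →ᵃ[ℝ] EuclideanSpace ℝ (Fin n)) := by
      funext t
      simp [hφdef, AffineMap.lineMap_apply, vsub_eq_sub, vadd_eq_add, add_comm]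
    rw [this]; exact h
  have hc : HasDerivAt (fun t : ℝ => x + t • (y - x)) (y - x) 0 := by
    simpa using ((hasDerivAt_id (0:ℝ)).smul_const (y - x)).const_add x
  have hu : HasDerivAt φ (fderiv ℝ u x (y - x)) 0 := by
    have h := (hdiff (x + (0:ℝ) • (y - x))).hasFDerivAt.comp_hasDerivAt 0 hc
    simp only [zero_smul, add_zero] at h
    exact h
  have hfg : fderiv ℝ u x (y - x) = ⟪gradient u x, y - x⟫ := by
    rw [gradient, InnerProductSpace.toDual_symm_apply]
  have hslope := hφ.le_slope_of_hasDerivAt (mem_univ (0:ℝ)) (mem_univ 1) one_pos hu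
  rw [slope_def_field] at hslope
  simp only [hφdef, one_smul, zero_smul, add_zero, sub_zero, div_one] at hslope
  have h1 : x + (y - x) = y := by abel
  rw [h1] at hslope
  linarith [hfg ▸ hslope]


lemma aux_minty (u : EuclideanSpace ℝ (Fin n) → ℝ) (hconv : ConvexOn ℝ Set.univ u)
    (hdiff : Differentiable ℝ u) (α : EuclideanSpace ℝ (Fin n)) (lam : ℝ) (hlam : 0 < lam) :
    ∃ y : EuclideanSpace ℝ (Fin n), gradient u y = α - (2*lam) • y ∧
      ∀ z, u y - ⟪α, y⟫ + lam * ‖y‖^2 ≤ u z - ⟪α, z⟫ + lam * ‖z‖^2 := by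
  set f : EuclideanSpace ℝ (Fin n) → ℝ := fun z => u z - ⟪α, z⟫ + lam * ‖z‖^2 with hfdef
  have hfc : Continuous f := by
    exact ((hdiff.continuous).sub (Continuous.inner continuous_const continuous_id)).add
      (continuous_const.mul (continuous_norm.pow 2))
  set C : ℝ := ‖gradient u 0 - α‖ with hC
  have hlb : ∀ z, u 0 - C * ‖z‖ + lam * ‖z‖^2 ≤ f z := by
    intro z
    have h1 := aux_subgrad u hconv hdiff 0 z
    simp only [sub_zero] at h1
    have h2 : |⟪gradient u 0 - α, z⟫| ≤ C * ‖z‖ := by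
      simpa [hC] using abs_real_inner_le_norm (gradient u 0 - α) z
    have h3 : ⟪gradient u 0 - α, z⟫ = ⟪gradient u 0, z⟫ - ⟪α, z⟫ := inner_sub_left _ _ _
    have h4 := abs_le.mp h2
    simp only [hfdef]
    nlinarith [h4.1, h4.2]
  set R : ℝ := (C + 1) / lam with hR
  have hCpos : 0 ≤ C := norm_nonneg _
  have hRpos : 0 < R := by positivity
  have hball0 : (0 : EuclideanSpace ℝ (Fin n)) ∈ Metric.closedBall (0 : EuclideanSpace ℝ (Fin n)) R := by
    simp [Metric.mem_closedBall, hRpos.le]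
  obtain ⟨y, hyb, hymin⟩ := (isCompact_closedBall (0 : EuclideanSpace ℝ (Fin n)) R).exists_isMinOn
    ⟨0, hball0⟩ hfc.continuousOn
  have hf0 : f 0 = u 0 := by simp [hfdef]
  have hout : ∀ z, R ≤ ‖z‖ → f 0 ≤ f z := by
    intro z hz
    have h1 := hlb z
    have h2 : C + 1 ≤ lam * ‖z‖ := by
      rw [hR, div_le_iff₀ hlam] at hz; linarith [hz]
    have h3 : (0:ℝ) ≤ ‖z‖ := norm_nonneg _
    rw [hf0]
    nlinarith
  have hglobal : ∀ z, f y ≤ f z := by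
    intro z
    by_cases hz : z ∈ Metric.closedBall (0 : EuclideanSpace ℝ (Fin n)) R
    · exact hymin hz
    · have hz' : R ≤ ‖z‖ := by
        simp only [Metric.mem_closedBall, dist_zero_right, not_le] at hz
        exact hz.le
      exact (hymin hball0).trans (hout z hz')
  have hmin : IsLocalMin f y := Filter.Eventually.of_forall hglobal
  have hD : HasFDerivAt f
      ((InnerProductSpace.toDual ℝ _ (gradient u y) - innerSL ℝ α) + lam • (2 • (innerSL ℝ y))) y := by
    have h1 : HasFDerivAt u (InnerProductSpace.toDual ℝ _ (gradient u y)) y :=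
      (hdiff y).hasGradientAt.hasFDerivAt
    have h2 : HasFDerivAt (fun z : EuclideanSpace ℝ (Fin n) => ⟪α, z⟫) (innerSL ℝ α) y :=
      (innerSL ℝ α).hasFDerivAt
    have h3 : HasFDerivAt (fun z : EuclideanSpace ℝ (Fin n) => lam * ‖z‖^2)
        (lam • (2 • (innerSL ℝ y))) y := (hasStrictFDerivAt_norm_sq y).hasFDerivAt.const_mul lam
    exact (h1.sub h2).add h3
  have hzero := hmin.hasFDerivAt_eq_zero hD
  have happ : ∀ v, ⟪gradient u y - α + (2*lam) • y, v⟫ = 0 := by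
    intro v
    have h5 := DFunLike.congr_fun hzero v
    simp only [ContinuousLinearMap.add_apply, ContinuousLinearMap.sub_apply,
      ContinuousLinearMap.smul_apply, innerSL_apply_apply, InnerProductSpace.toDual_apply_apply,
      ContinuousLinearMap.zero_apply, smul_eq_mul] at h5
    rw [inner_add_left, inner_sub_left, real_inner_smul_left]
    rw [two_smul] at h5
    linarith
  have hv0 : gradient u y - α + (2*lam) • y = 0 :=
    inner_self_eq_zero.mp (happ _)
  refine ⟨y, ?_, fun z => hglobal z⟩
  have : gradient u y - (α - (2*lam) • y) = 0 := by
    rw [show gradient u y - (α - (2*lam) • y) = gradient u y - α + (2*lam) • y from by abel]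
    exact hv0
  exact sub_eq_zero.mp this


lemma aux_key (u : EuclideanSpace ℝ (Fin n) → ℝ) (hconv : ConvexOn ℝ Set.univ u)
    (hdiff : Differentiable ℝ u)
    (V : EuclideanSpace ℝ (Fin n) → ℝ)
    (hV : ∀ x, Filter.Tendsto (fun ρ : ℝ => u (ρ • x) / ρ) Filter.atTop (nhds (V x)))
    (α : EuclideanSpace ℝ (Fin n)) (hα : ∀ x, ⟪α, x⟫ ≤ V x) :
    α ∈ closure (Set.range (gradient u)) := by
  by_contra hc
  rw [Metric.mem_closure_iff] at hc
  push_neg at hc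
  obtain ⟨ε, hε, hdist⟩ := hc
  have hlam : ∀ k : ℕ, (0:ℝ) < 1 / (2 * ((k:ℝ)+1)) := by intro k; positivity
  choose y hy hymin using fun k : ℕ => aux_minty u hconv hdiff α (1/(2*((k:ℝ)+1))) (hlam k)
  have hμ : ∀ k : ℕ, (2 : ℝ) * (1/(2*((k:ℝ)+1))) = ((k:ℝ)+1)⁻¹ := by
    intro k; field_simp
  have hnorm : ∀ k : ℕ, ε ≤ ((k:ℝ)+1)⁻¹ * ‖y k‖ := by
    intro k
    have h1 := hdist (gradient u (y k)) (mem_range_self (y k))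
    rw [hy k, hμ k] at h1
    have h2 : dist α (α - ((k:ℝ)+1)⁻¹ • y k) = ((k:ℝ)+1)⁻¹ * ‖y k‖ := by
      rw [dist_eq_norm, show α - (α - ((k:ℝ)+1)⁻¹ • y k) = ((k:ℝ)+1)⁻¹ • y k from by abel,
        norm_smul, Real.norm_eq_abs, abs_of_pos (by positivity : (0:ℝ) < ((k:ℝ)+1)⁻¹)]
    rw [h2] at h1
    exact h1
  have hynz : ∀ k : ℕ, y k ≠ 0 := by
    intro k h0
    have := hnorm k
    rw [h0] at this
    simp at this
    linarith
  set d : ℕ → EuclideanSpace ℝ (Fin n) := fun k => ‖y k‖⁻¹ • y k with hd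
  have hd_mem : ∀ k, d k ∈ Metric.sphere (0 : EuclideanSpace ℝ (Fin n)) 1 := by
    intro k
    have : ‖y k‖ ≠ 0 := norm_ne_zero_iff.mpr (hynz k)
    simp [hd, Metric.mem_sphere, dist_zero_right, norm_smul, abs_of_nonneg, inv_mul_cancel₀ this]
  obtain ⟨w, hw_mem, φ, hφmono, hφtend⟩ :=
    (isCompact_sphere (0 : EuclideanSpace ℝ (Fin n)) 1).tendsto_subseq hd_mem
  -- pointwise estimate for k with R ≤ ‖y k‖
  have hcore : ∀ (R : ℝ), 0 < R → ∀ k : ℕ, R ≤ ‖y k‖ →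
      u (R • d k) ≤ u 0 + R * ⟪α, d k⟫ - R * (ε/2) := by
    intro R hR k hk
    have hnk : (0:ℝ) < ‖y k‖ := lt_of_lt_of_le hR hk
    set t : ℝ := R / ‖y k‖ with ht
    have ht0 : 0 < t := by positivity
    have ht1 : t ≤ 1 := by rw [ht, div_le_one hnk]; exact hk
    have hRd : R • d k = t • y k := by
      rw [hd, smul_smul, ht, div_eq_mul_inv]
    have hconvex : u (t • y k) ≤ (1-t) * u 0 + t * u (y k) := by
      have h := hconv.2 (mem_univ (0 : EuclideanSpace ℝ (Fin n))) (mem_univ (y k))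
        (by linarith : (0:ℝ) ≤ 1 - t) ht0.le (by ring)
      simpa using h
    have hminv := hymin k 0
    simp only [inner_zero_right, norm_zero] at hminv
    -- hminv : u (y k) - ⟪α, y k⟫ + (1/(2(k+1))) ‖y k‖² ≤ u 0 - 0 + _ * 0
    have hmin' : u (y k) ≤ u 0 + ⟪α, y k⟫ - (1/(2*((k:ℝ)+1))) * ‖y k‖^2 := by
      nlinarith [hminv]
    have hinner : t * ⟪α, y k⟫ = R * ⟪α, d k⟫ := by
      rw [show R * ⟪α, d k⟫ = ⟪α, R • d k⟫ from (real_inner_smul_right _ _ _).symm, hRd,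
        real_inner_smul_right]
    have hq : R * (ε/2) ≤ t * ((1/(2*((k:ℝ)+1))) * ‖y k‖^2) := by
      have h1 := hnorm k
      have h2 : t * ((1/(2*((k:ℝ)+1))) * ‖y k‖^2) = R * (((k:ℝ)+1)⁻¹ * ‖y k‖) / 2 := by
        rw [ht]; field_simp
      rw [h2]
      have : R * ε ≤ R * (((k:ℝ)+1)⁻¹ * ‖y k‖) := by
        exact mul_le_mul_of_nonneg_left h1 hR.le
      linarith
    calc u (R • d k) = u (t • y k) := by rw [hRd]
      _ ≤ (1-t) * u 0 + t * u (y k) := hconvex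
      _ ≤ (1-t) * u 0 + t * (u 0 + ⟪α, y k⟫ - (1/(2*((k:ℝ)+1))) * ‖y k‖^2) := by
          nlinarith [hmin']
      _ = u 0 + t * ⟪α, y k⟫ - t * ((1/(2*((k:ℝ)+1))) * ‖y k‖^2) := by ring
      _ ≤ u 0 + R * ⟪α, d k⟫ - R * (ε/2) := by rw [hinner]; linarith [hq]
  -- pass to the limit along the subsequence
  have hEst : ∀ R : ℝ, 0 < R → u (R • w) ≤ u 0 + R * ⟪α, w⟫ - R * (ε/2) := by
    intro R hR
    have h1 : Tendsto (fun j => u (R • d (φ j))) atTop (𝓝 (u (R • w))) :=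
      (hdiff.continuous.tendsto _).comp (hφtend.const_smul R)
    have h2 : Tendsto (fun j => u 0 + R * ⟪α, d (φ j)⟫ - R * (ε/2)) atTop
        (𝓝 (u 0 + R * ⟪α, w⟫ - R * (ε/2))) := by
      have hinner : Tendsto (fun j => ⟪α, d (φ j)⟫) atTop (𝓝 ⟪α, w⟫) :=
        ((Continuous.inner continuous_const continuous_id).tendsto _).comp hφtend
      exact ((tendsto_const_nhds.add (hinner.const_mul R)).sub tendsto_const_nhds)
    refine le_of_tendsto_of_tendsto h1 h2 ?_
    filter_upwards [eventually_ge_atTop ⌈R/ε⌉₊] with j hj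
    have hkR : R ≤ ‖y (φ j)‖ := by
      have h3 : R/ε ≤ (j:ℝ) := by
        exact_mod_cast (Nat.ceil_le.mp hj)
      have h4 : (j:ℝ) ≤ (φ j : ℝ) := by exact_mod_cast hφmono.le_apply
      have h5 := hnorm (φ j)
      have h6 : (0:ℝ) < (φ j : ℝ) + 1 := by positivity
      have h7 : ε * ((φ j : ℝ)+1) ≤ ‖y (φ j)‖ := by
        rw [show ε * ((φ j : ℝ)+1) = (((φ j : ℝ)+1)⁻¹)⁻¹ * ε from by rw [inv_inv]; ring]
        calc (((φ j : ℝ)+1)⁻¹)⁻¹ * ε = (ε * ((φ j:ℝ)+1)) := by rw [inv_inv]; ring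
          _ ≤ ‖y (φ j)‖ := by
            have := mul_le_mul_of_nonneg_left h5 h6.le
            rw [← mul_assoc, mul_inv_cancel₀ (ne_of_gt h6), one_mul] at this
            linarith [this]
      have h8 : R ≤ ε * ((j:ℝ)) := by
        rw [div_le_iff₀ hε] at h3; linarith [h3]
      have : ε * (j:ℝ) ≤ ε * ((φ j:ℝ)+1) := by nlinarith
      linarith
    exact hcore R hR (φ j) hkR
  -- conclude V w ≤ ⟪α, w⟫ - ε/2
  have h3 : Tendsto (fun ρ : ℝ => u 0 / ρ + ⟪α, w⟫ - ε/2) atTop (𝓝 (0 + ⟪α, w⟫ - ε/2)) :=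
    ((Tendsto.div_atTop tendsto_const_nhds tendsto_id).add tendsto_const_nhds).sub
      tendsto_const_nhds
  have h4 : V w ≤ 0 + ⟪α, w⟫ - ε/2 := by
    refine le_of_tendsto_of_tendsto (hV w) h3 ?_
    filter_upwards [eventually_gt_atTop (0:ℝ)] with ρ hρ
    have h5 := hEst ρ hρ
    rw [div_le_iff₀ hρ]
    have h8 : (u 0 / ρ + ⟪α, w⟫ - ε/2) * ρ = u 0 + ρ * ⟪α, w⟫ - ρ * (ε/2) := by
      field_simp
    rw [h8]
    exact h5
  have h6 := hα w
  linarith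


/-- The tangential mapping of a function `V` at a point `x₀`. -/
def tangentialMapping {n : ℕ} (V : EuclideanSpace ℝ (Fin n) → ℝ)
    (x₀ : EuclideanSpace ℝ (Fin n)) : Set (EuclideanSpace ℝ (Fin n)) :=
  {α | ∀ x, ⟪α, x - x₀⟫ + V x₀ ≤ V x}

theorem stmt_13 (n : ℕ) (hn : 2 ≤ n) (u : EuclideanSpace ℝ (Fin n) → ℝ)
    (hconv : ConvexOn ℝ Set.univ u)
    (hdiff : Differentiable ℝ u)
    (hsp : ∀ x, ‖gradient u x‖ < 1)
    (V : EuclideanSpace ℝ (Fin n) → ℝ)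
    (hV : ∀ x, Filter.Tendsto (fun ρ : ℝ => u (ρ • x) / ρ) Filter.atTop (nhds (V x))) :
    closure (⋃ x : EuclideanSpace ℝ (Fin n), tangentialMapping V x)
        = tangentialMapping V 0 ∧
      tangentialMapping V 0 = closure (Set.range (gradient u)) := by
  -- V 0 = 0
  have hV0 : V 0 = 0 := by
    have h1 := hV 0
    simp only [smul_zero] at h1
    exact tendsto_nhds_unique h1 (Tendsto.div_atTop tendsto_const_nhds tendsto_id)
  -- homogeneity
  have hhom : ∀ (t : ℝ), 0 < t → ∀ x, V (t • x) = t * V x := by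
    intro t ht x
    have h1 := hV (t • x)
    have h2 : Tendsto (fun ρ : ℝ => u ((ρ * t) • x) / (ρ * t)) atTop (𝓝 (V x)) :=
      (hV x).comp (Tendsto.atTop_mul_const ht tendsto_id)
    have h3 : Tendsto (fun ρ : ℝ => t * (u ((ρ * t) • x) / (ρ * t))) atTop (𝓝 (t * V x)) :=
      h2.const_mul t
    have h4 : (fun ρ : ℝ => t * (u ((ρ * t) • x) / (ρ * t))) =ᶠ[atTop]
        (fun ρ : ℝ => u (ρ • (t • x)) / ρ) := by
      filter_upwards [eventually_gt_atTop (0:ℝ)] with ρ hρ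
      rw [smul_smul, show ρ * t = (ρ * t) from rfl]
      field_simp
    exact tendsto_nhds_unique h1 (h3.congr' h4)
  -- reformulation of the tangential mapping at 0
  have hT0 : tangentialMapping V 0 = {α | ∀ x, ⟪α, x⟫ ≤ V x} := by
    ext α
    simp [tangentialMapping, hV0]
  -- tangential mapping at 0 is closed
  have hclosed : IsClosed (tangentialMapping V 0) := by
    rw [hT0]
    have : {α : EuclideanSpace ℝ (Fin n) | ∀ x, ⟪α, x⟫ ≤ V x}
        = ⋂ x, {α : EuclideanSpace ℝ (Fin n) | ⟪α, x⟫ ≤ V x} := by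
      ext α; simp
    rw [this]
    exact isClosed_iInter fun x =>
      isClosed_le (Continuous.inner continuous_id continuous_const) continuous_const
  -- every tangential mapping is contained in the one at 0
  have hsub : ∀ x₀, tangentialMapping V x₀ ⊆ tangentialMapping V 0 := by
    intro x₀ α hα
    rw [hT0]
    intro x
    have hc0 : ⟪α, x₀⟫ - V x₀ ≥ 0 := by
      have := hα 0
      rw [hV0] at this
      have h2 : ⟪α, (0:EuclideanSpace ℝ (Fin n)) - x₀⟫ = -⟪α, x₀⟫ := by
        rw [zero_sub, inner_neg_right]
      rw [h2] at this
      linarith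
    have hlim : Tendsto (fun t : ℝ => V x + (⟪α, x₀⟫ - V x₀) / t) atTop (𝓝 (V x + 0)) :=
      tendsto_const_nhds.add (Tendsto.div_atTop tendsto_const_nhds tendsto_id)
    rw [add_zero] at hlim
    refine ge_of_tendsto hlim ?_
    filter_upwards [eventually_gt_atTop (0:ℝ)] with t ht
    have h1 := hα (t • x)
    rw [hhom t ht x] at h1
    have h2 : ⟪α, t • x - x₀⟫ = t * ⟪α, x⟫ - ⟪α, x₀⟫ := by
      rw [inner_sub_right, real_inner_smul_right]
    rw [h2] at h1
    -- h1 : t * ⟪α, x⟫ - ⟪α, x₀⟫ + V x₀ ≤ t * V x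
    rw [← sub_nonneg]
    have h3 : V x + (⟪α, x₀⟫ - V x₀) / t - ⟪α, x⟫
        = (t * V x + (⟪α, x₀⟫ - V x₀) - t * ⟪α, x⟫) / t := by
      field_simp
    rw [h3]
    apply div_nonneg _ ht.le
    linarith
  -- gradients belong to the tangential mapping at 0
  have hgrad_mem : ∀ z, gradient u z ∈ tangentialMapping V 0 := by
    intro z
    rw [hT0]
    intro x
    have hlim : Tendsto (fun ρ : ℝ => ⟪gradient u z, x⟫ + (u z - ⟪gradient u z, z⟫) / ρ)
        atTop (𝓝 (⟪gradient u z, x⟫ + 0)) :=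
      tendsto_const_nhds.add (Tendsto.div_atTop tendsto_const_nhds tendsto_id)
    rw [add_zero] at hlim
    refine le_of_tendsto_of_tendsto hlim (hV x) ?_
    filter_upwards [eventually_gt_atTop (0:ℝ)] with ρ hρ
    have h1 := aux_subgrad u hconv hdiff z (ρ • x)
    have h2 : ⟪gradient u z, ρ • x - z⟫ = ρ * ⟪gradient u z, x⟫ - ⟪gradient u z, z⟫ := by
      rw [inner_sub_right, real_inner_smul_right]
    rw [h2] at h1
    rw [le_div_iff₀ hρ]
    have h3 : (⟪gradient u z, x⟫ + (u z - ⟪gradient u z, z⟫) / ρ) * ρ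
        = ρ * ⟪gradient u z, x⟫ + (u z - ⟪gradient u z, z⟫) := by
      field_simp
    rw [h3]
    linarith
  -- the key inclusion
  have hkey : tangentialMapping V 0 ⊆ closure (Set.range (gradient u)) := by
    intro α hα
    rw [hT0] at hα
    exact aux_key u hconv hdiff V hV α hα
  constructor
  · refine subset_antisymm (closure_minimal (iUnion_subset hsub) hclosed) ?_
    exact (subset_iUnion (fun x => tangentialMapping V x) 0).trans subset_closure
  · exact subset_antisymm hkey
      (closure_minimal (range_subset_iff.mpr hgrad_mem) hclosed)
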